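/- Chaitin's incompleteness theorem: for every consistent, recursively enumerable, arithmetically sound-for-Σ₁ theory T that can express statements 'K(x) > c', there is a constant c_T such that for all x, T does not prove 'K(x) > c_T'. -/

import Mathlib

/-- The e-th partial recursive function. -/
def phi (e : ℕ) : ℕ →. ℕ := (Denumerable.ofNat Nat.Partrec.Code e).eval

/-- A predicate on ℕ is recursively enumerable if it is the domain of a
partial recursive function. -/
def REPredNat (p : ℕ → Prop) : Prop :=
  ∃ f : ℕ →. ℕ, Partrec f ∧ ∀ n, p n ↔ (f n).Dom

/-- Kolmogorov complexity: the least index `e` such that φ_e(0) = x. -/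
noncomputable def Kc (x : ℕ) : ℕ := sInf {e | x ∈ phi e 0}

/-- Chaitin's incompleteness theorem: if `Prv x c` expresses that the consistent,
recursively enumerable theory `T` proves "K(x) > c" (this set of provable sentences
being r.e. and sound: everything `T` proves of this form is true), then there is a
constant `c_T` such that `T` proves "K(x) > c_T" for no `x`. -/
theorem chaitin_incompleteness
    (Prv : ℕ → ℕ → Prop)
    (hre : REPredNat (fun p => Prv p.unpair.1 p.unpair.2))
    (hsound : ∀ x c, Prv x c → c < Kc x) :
    ∃ cT : ℕ, ∀ x, ¬ Prv x cT := by
  classical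
  obtain ⟨f, hf, hfs⟩ := hre
  obtain ⟨cf, hcf⟩ := Nat.Partrec.Code.exists_code.1 (Partrec.nat_iff.1 hf)
  -- the search function: given c, dovetail looking for some p with f p halting and
  -- p.unpair.2 = c, returning p.unpair.1
  set h2 : ℕ → ℕ → Option ℕ := fun c n =>
    if (Nat.Partrec.Code.evaln n.unpair.1 cf n.unpair.2).isSome ∧ n.unpair.2.unpair.2 = c then
      some n.unpair.2.unpair.1 else none with hh2
  have hprim : Primrec₂ h2 := by
    have h1 : Primrec fun p : ℕ × ℕ =>
        Nat.Partrec.Code.evaln p.2.unpair.1 cf p.2.unpair.2 :=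
      Nat.Partrec.Code.primrec_evaln.comp <|
        ((Primrec.fst.comp (Primrec.unpair.comp Primrec.snd)).pair (Primrec.const cf)).pair
          (Primrec.snd.comp (Primrec.unpair.comp Primrec.snd))
    exact Primrec.ite
      (PrimrecPred.and
        (Primrec.eq.comp (Primrec.option_isSome.comp h1) (Primrec.const true))
        (Primrec.eq.comp
          (Primrec.snd.comp
            (Primrec.unpair.comp (Primrec.snd.comp (Primrec.unpair.comp Primrec.snd))))
          Primrec.fst))
      (Primrec.option_some.comp
        (Primrec.fst.comp
          (Primrec.unpair.comp (Primrec.snd.comp (Primrec.unpair.comp Primrec.snd)))))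
      (Primrec.const none)
  set g : ℕ →. ℕ := fun c => Nat.rfindOpt (h2 c) with hg
  have hgpart : Partrec g := Partrec.rfindOpt hprim.to_comp
  -- every output of g c is some x with Prv x c
  have hgout : ∀ c x, x ∈ g c → Prv x c := by
    intro c x hx
    obtain ⟨n, hn⟩ := Nat.rfindOpt_spec hx
    simp only [hh2] at hn
    split_ifs at hn with hcond
    · obtain ⟨hev, hc2⟩ := hcond
      obtain ⟨y, hy⟩ := Option.isSome_iff_exists.1 hev
      have hdom : (f n.unpair.2).Dom := by
        rw [← hcf]
        exact Part.dom_iff_mem.2 ⟨y, Nat.Partrec.Code.evaln_sound hy⟩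
      have := (hfs n.unpair.2).2 hdom
      rw [Option.mem_def, Option.some_inj] at hn
      rw [hn, hc2] at this
      exact this
    · exact (Option.not_mem_none x hn).elim
  -- g c is defined whenever some x has Prv x c
  have hgdom : ∀ c x, Prv x c → (g c).Dom := by
    intro c x hx
    have : (f (Nat.pair x c)).Dom := by
      apply (hfs (Nat.pair x c)).1
      simpa using hx
    rw [← hcf] at this
    obtain ⟨y, hy⟩ := Part.dom_iff_mem.1 this
    obtain ⟨k, hk⟩ := Nat.Partrec.Code.evaln_complete.1 hy
    apply Nat.rfindOpt_dom.2
    refine ⟨Nat.pair k (Nat.pair x c), x, ?_⟩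
    simp only [hh2, Nat.unpair_pair]
    rw [if_pos ⟨by rw [Option.mem_def.1 hk]; rfl, trivial⟩]
    simp
  -- Kleene fixed point: a code cd whose eval is the constant function g (encode cd)
  have hF : Partrec₂ (fun (cd : Nat.Partrec.Code) (_ : ℕ) => g (Encodable.encode cd)) :=
    hgpart.comp (Computable.encode.comp Computable.fst)
  obtain ⟨cd, hcd⟩ := Nat.Partrec.Code.fixed_point₂ hF
  refine ⟨Encodable.encode cd, fun x hx => ?_⟩
  set cT := Encodable.encode cd
  have hdom : (g cT).Dom := hgdom cT x hx
  set x' := (g cT).get hdom with hx'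
  have hmem : x' ∈ g cT := Part.get_mem hdom
  have hPrv : Prv x' cT := hgout cT x' hmem
  have hphi : x' ∈ phi cT 0 := by
    show x' ∈ (Denumerable.ofNat Nat.Partrec.Code cT).eval 0
    rw [show (Denumerable.ofNat Nat.Partrec.Code cT) = cd from Denumerable.ofNat_encode cd, hcd]
    exact hmem
  have hle : Kc x' ≤ cT := Nat.sInf_le hphi
  exact absurd (hsound x' cT hPrv) (not_lt.2 hle)
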